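/- arXiv:2012.14453 — 3 statements merged into one kernel-verified Lean document; each statement's English description precedes it below -/
import Mathlib

section
/- Consider nested node sets N_m ⊆ N_n of sizes m ≤ n with empirical risks L_m, L_n and optimizers w*_m = argmin L_m, w*_n = argmin L_n. Suppose (i) ‖∇L_m(w_m)‖² ≤ 2μ V_{ms} where each L_i (hence L_m) is μ-strongly convex, and (ii) for every w, |L_n(w) - L_m(w)| ≤ ((n-m)/n)(V_{(n-m)s} + V_{ms}). Then L_n(w_m) - L_n(w*_n) ≤ (2(n-m)/n)(V_{(n-m)s} + V_{ms}) + V_{ms}. -/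
open Set
open scoped RealInnerProductSpace

/-- First-order lower bound for a differentiable strongly convex function. -/
lemma strong_convex_first_order {E : Type*} [NormedAddCommGroup E] [InnerProductSpace ℝ E]
    [CompleteSpace E] {f : E → ℝ} {μ : ℝ}
    (hconv : StrongConvexOn Set.univ μ f) (hdiff : Differentiable ℝ f) (x y : E) :
    f x + ⟪gradient f x, y - x⟫ + μ / 2 * ‖y - x‖ ^ 2 ≤ f y := by
  set g : E → ℝ := fun z => f z - μ / 2 * ‖z‖ ^ 2 with hg
  have hgconv : ConvexOn ℝ Set.univ g := strongConvexOn_iff_convex.mp hconv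
  set L : ℝ →ᵃ[ℝ] E := AffineMap.lineMap x y with hL
  have hφconv : ConvexOn ℝ Set.univ (g ∘ L) := by
    have := hgconv.comp_affineMap L
    simpa using this
  -- derivative of g ∘ L at 0
  have hLapp : ∀ t : ℝ, L t = x + t • (y - x) := by
    intro t; simp [hL, AffineMap.lineMap_apply, add_comm]
  have hLder : HasDerivAt (fun t : ℝ => L t) (y - x) 0 := by
    simp only [hLapp]
    simpa using ((hasDerivAt_id (0:ℝ)).smul_const (y - x)).const_add x
  have hfd : HasFDerivAt f (InnerProductSpace.toDual ℝ E (gradient f x)) x :=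
    hasGradientAt_iff_hasFDerivAt.mp (hdiff x).hasGradientAt
  have hL0 : L (0:ℝ) = x := by simp [hLapp]
  have hfdL : HasFDerivAt f (InnerProductSpace.toDual ℝ E (gradient f x))
      ((fun t : ℝ => L t) 0) := by simpa [hL0] using hfd
  have h1 : HasDerivAt (fun t : ℝ => f (L t)) ⟪gradient f x, y - x⟫ 0 := by
    exact hfdL.comp_hasDerivAt 0 hLder
  have h2 : HasDerivAt (fun t : ℝ => ‖L t‖ ^ 2) (2 * ⟪x, y - x⟫) 0 := by
    have := hLder.norm_sq
    rwa [hL0] at this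
  have hφder : HasDerivAt (g ∘ L) (⟪gradient f x, y - x⟫ - μ / 2 * (2 * ⟪x, y - x⟫)) 0 :=
    h1.sub (h2.const_mul (μ / 2))
  have hslope := hφconv.le_slope_of_hasDerivAt (mem_univ (0:ℝ)) (mem_univ (1:ℝ))
    one_pos hφder
  have hφ0 : (g ∘ L) 0 = g x := by simp [hL0]
  have hφ1 : (g ∘ L) 1 = g y := by simp [hLapp]
  rw [slope_def_field] at hslope
  norm_num [hφ0, hφ1] at hslope
  have hnorm : ‖y - x‖ ^ 2 = ‖y‖ ^ 2 - 2 * ⟪x, y⟫ + ‖x‖ ^ 2 := by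
    rw [norm_sub_sq_real]; ring_nf; rw [real_inner_comm]; ring
  have hinner : ⟪x, y - x⟫ = ⟪x, y⟫ - ‖x‖ ^ 2 := by
    rw [inner_sub_right, real_inner_self_eq_norm_sq]
  have hL1 : L (1:ℝ) = y := by simp [hLapp]
  rw [hL0, hL1] at hslope
  simp only [hg] at hslope
  rw [hinner] at hslope
  rw [hnorm]
  ring_nf at hslope ⊢
  linarith [(inner_gradient_left : ⟪gradient f x, y - x⟫ = fderiv ℝ f x (y - x)), map_sub (fderiv ℝ f x) y x]

lemma pl_bound {E : Type*} [NormedAddCommGroup E] [InnerProductSpace ℝ E]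
    [CompleteSpace E] {f : E → ℝ} {μ : ℝ} (hμ : 0 < μ)
    (hconv : StrongConvexOn Set.univ μ f) (hdiff : Differentiable ℝ f)
    (x xs : E) :
    f x - f xs ≤ ‖gradient f x‖ ^ 2 / (2 * μ) := by
  have h := strong_convex_first_order hconv hdiff x xs
  have hcs : -(‖gradient f x‖ * ‖xs - x‖) ≤ ⟪gradient f x, xs - x⟫ := by
    have := abs_real_inner_le_norm (gradient f x) (xs - x)
    linarith [neg_abs_le (⟪gradient f x, xs - x⟫)]
  rw [le_div_iff₀ (by positivity : (0:ℝ) < 2 * μ)]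
  nlinarith [sq_nonneg (‖gradient f x‖ - μ * ‖xs - x‖), norm_nonneg (xs - x),
    norm_nonneg (gradient f x)]



/-- For nested node sets `Nm ⊆ Nn` with empirical risks `L_m, L_n` and
optimizers `w*_m, w*_n`, if `‖∇L_m(w_m)‖² ≤ 2μV_{ms}` with `L_m` `μ`-strongly convex, and
`|L_n(w) - L_m(w)| ≤ ((n-m)/n)(V_{(n-m)s} + V_{ms})` for all `w`, then
`L_n(w_m) - L_n(w*_n) ≤ (2(n-m)/n)(V_{(n-m)s} + V_{ms}) + V_{ms}`. -/
theorem stmt_2 {ι E : Type*} [NormedAddCommGroup E] [InnerProductSpace ℝ E] [CompleteSpace E]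
    (Nm Nn : Finset ι) (hsub : Nm ⊆ Nn)
    (m n : ℕ) (hmcard : Nm.card = m) (hncard : Nn.card = n) (hm : 0 < m) (hmn : m ≤ n)
    (Lloc : ι → E → ℝ) (μ V1 V2 : ℝ) (hμ : 0 < μ) (hV1 : 0 ≤ V1) (hV2 : 0 ≤ V2)
    (Lm Ln : E → ℝ)
    (hLm : Lm = fun w => (1 / (m : ℝ)) * ∑ i ∈ Nm, Lloc i w)
    (hLn : Ln = fun w => (1 / (n : ℝ)) * ∑ i ∈ Nn, Lloc i w)
    (hconv : StrongConvexOn Set.univ μ Lm) (hdiff : Differentiable ℝ Lm)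
    (wm wsm wsn : E) (hminm : ∀ y, Lm wsm ≤ Lm y) (hminn : ∀ y, Ln wsn ≤ Ln y)
    (hgrad : ‖gradient Lm wm‖ ^ 2 ≤ 2 * μ * V2)
    (hunif : ∀ w, |Ln w - Lm w| ≤ (((n : ℝ) - m) / n) * (V1 + V2)) :
    Ln wm - Ln wsn ≤ 2 * ((n : ℝ) - m) / n * (V1 + V2) + V2 := by
  have hn : 0 < n := lt_of_lt_of_le hm hmn
  have hnR : (0:ℝ) < n := by exact_mod_cast hn
  have h1 : Ln wm - Lm wm ≤ (((n : ℝ) - m) / n) * (V1 + V2) := (abs_le.mp (hunif wm)).2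
  have h4 : -((((n : ℝ) - m) / n) * (V1 + V2)) ≤ Ln wsn - Lm wsn := (abs_le.mp (hunif wsn)).1
  have h2 : Lm wm - Lm wsm ≤ V2 := by
    have hpl := pl_bound hμ hconv hdiff wm wsm
    have : ‖gradient Lm wm‖ ^ 2 / (2 * μ) ≤ V2 := by
      rw [div_le_iff₀ (by positivity)]
      nlinarith
    linarith
  have h3 : Lm wsm ≤ Lm wsn := hminm wsn
  have key : 2 * ((n : ℝ) - m) / n * (V1 + V2) = 2 * ((((n : ℝ) - m) / n) * (V1 + V2)) := by
    ring
  linarith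
end

section
/- With the setting of nested node sets N_m ⊆ N_n, if ‖∇L_m(w_m)‖² ≤ 2μ V_{ms} and the gradient approximation errors satisfy ‖(1/(n-m)) Σ_{i∈N_n\N_m} ∇L^i(w) - ∇L(w)‖ ≤ V_{(n-m)s}^{1/2} and ‖∇L_m(w) - ∇L(w)‖ ≤ V_{ms}^{1/2} for all w, then ‖∇L_n(w_m)‖² ≤ 2((n-m)/n)²(V_{(n-m)s}^{1/2} + V_{ms}^{1/2})² + 4μ V_{ms}. -/
lemma grad_avg {ι E : Type*} [NormedAddCommGroup E] [InnerProductSpace ℝ E] [CompleteSpace E]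
    (s : Finset ι) (f : ι → E → ℝ) (hf : ∀ i, Differentiable ℝ (f i)) (c : ℝ) (x : E) :
    gradient (fun w => c * ∑ i ∈ s, f i w) x = c • ∑ i ∈ s, gradient (f i) x := by
  unfold gradient
  rw [fderiv_const_mul (by exact (Differentiable.fun_sum fun i _ => hf i).differentiableAt),
    fderiv_fun_sum (fun i _ => (hf i).differentiableAt), map_smul, map_sum]

/-- With nested node sets `Nm ⊆ Nn`, if `‖∇L_m(w_m)‖² ≤ 2μV_{ms}` and the
gradient approximation errors over `Nn \ Nm` (with `(n-m)s` samples) and over `Nm` (with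
`ms` samples) are bounded by `√V_{(n-m)s}` and `√V_{ms}` respectively, then
`‖∇L_n(w_m)‖² ≤ 2((n-m)/n)²(√V_{(n-m)s} + √V_{ms})² + 4μV_{ms}`. -/
theorem stmt_3 {ι E : Type*} [DecidableEq ι]
    [NormedAddCommGroup E] [InnerProductSpace ℝ E] [CompleteSpace E]
    (Nm Nn : Finset ι) (hsub : Nm ⊆ Nn)
    (m n : ℕ) (hmcard : Nm.card = m) (hncard : Nn.card = n) (hm : 0 < m) (hmn : m < n)
    (Lloc : ι → E → ℝ) (L : E → ℝ) (μ V1 V2 : ℝ) (hμ : 0 < μ) (hV1 : 0 ≤ V1) (hV2 : 0 ≤ V2)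
    (hdiff : ∀ i, Differentiable ℝ (Lloc i)) (hdiffL : Differentiable ℝ L)
    (Lm Ln : E → ℝ)
    (hLm : Lm = fun w => (1 / (m : ℝ)) * ∑ i ∈ Nm, Lloc i w)
    (hLn : Ln = fun w => (1 / (n : ℝ)) * ∑ i ∈ Nn, Lloc i w)
    (wm : E)
    (hgrad : ‖gradient Lm wm‖ ^ 2 ≤ 2 * μ * V2)
    (hg1 : ∀ w, ‖(1 / ((n : ℝ) - m)) • ∑ i ∈ Nn \ Nm, gradient (Lloc i) w - gradient L w‖
      ≤ Real.sqrt V1)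
    (hg2 : ∀ w, ‖gradient Lm w - gradient L w‖ ≤ Real.sqrt V2) :
    ‖gradient Ln wm‖ ^ 2
      ≤ 2 * (((n : ℝ) - m) / n) ^ 2 * (Real.sqrt V1 + Real.sqrt V2) ^ 2 + 4 * μ * V2 := by
  have hm' : (0:ℝ) < m := by exact_mod_cast hm
  have hn' : (0:ℝ) < n := by exact_mod_cast hm.trans hmn
  have hnm : (0:ℝ) < (n:ℝ) - m := by
    have : (m:ℝ) < n := by exact_mod_cast hmn
    linarith
  set G := gradient Lm wm with hGdef
  set Gn := gradient Ln wm with hGndef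
  set S1 := ∑ i ∈ Nm, gradient (Lloc i) wm with hS1
  set S2 := ∑ i ∈ Nn \ Nm, gradient (Lloc i) wm with hS2
  set g := (1 / ((n:ℝ) - m)) • S2 with hg
  have hG : G = (1 / (m:ℝ)) • S1 := by
    rw [hGdef, hLm, grad_avg Nm Lloc hdiff]
  have hGn : Gn = (1 / (n:ℝ)) • (S2 + S1) := by
    rw [hGndef, hLn, grad_avg Nn Lloc hdiff, hS1, hS2, Finset.sum_sdiff hsub]
  have hkey : Gn - G = (((n:ℝ) - m) / n) • (g - G) := by
    rw [hGn, hG, hg]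
    match_scalars <;> field_simp <;> ring
  -- bound ‖g - G‖
  have hgG : ‖g - G‖ ≤ Real.sqrt V1 + Real.sqrt V2 := by
    have h1 := hg1 wm
    have h2 := hg2 wm
    rw [← hGdef] at h2
    calc ‖g - G‖ ≤ ‖g - gradient L wm‖ + ‖gradient L wm - G‖ := norm_sub_le_norm_sub_add_norm_sub _ _ _
      _ ≤ Real.sqrt V1 + Real.sqrt V2 := by
          rw [norm_sub_rev (gradient L wm) G]
          exact add_le_add h1 h2
  have hdiffnorm : ‖Gn - G‖ ≤ (((n:ℝ) - m) / n) * (Real.sqrt V1 + Real.sqrt V2) := by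
    rw [hkey, norm_smul, Real.norm_eq_abs, abs_of_pos (by positivity)]
    exact mul_le_mul_of_nonneg_left hgG (by positivity)
  have htri : ‖Gn‖ ≤ ‖Gn - G‖ + ‖G‖ := by
    simpa using norm_add_le (Gn - G) G
  have hnn1 : (0:ℝ) ≤ ‖Gn - G‖ := norm_nonneg _
  have hnn2 : (0:ℝ) ≤ ‖G‖ := norm_nonneg _
  have hnn3 : (0:ℝ) ≤ ‖Gn‖ := norm_nonneg _
  have h2sq : ‖Gn‖^2 ≤ 2 * ‖Gn - G‖^2 + 2 * ‖G‖^2 := by nlinarith [sq_nonneg (‖Gn - G‖ - ‖G‖), mul_self_le_mul_self hnn3 htri, sq_nonneg ‖Gn‖]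
  have hrhs : ‖Gn - G‖^2 ≤ (((n:ℝ) - m) / n)^2 * (Real.sqrt V1 + Real.sqrt V2)^2 := by
    have h := mul_self_le_mul_self hnn1 hdiffnorm
    calc ‖Gn - G‖^2 = ‖Gn - G‖ * ‖Gn - G‖ := sq _
      _ ≤ ((((n:ℝ) - m) / n) * (Real.sqrt V1 + Real.sqrt V2)) *
          ((((n:ℝ) - m) / n) * (Real.sqrt V1 + Real.sqrt V2)) := h
      _ = (((n:ℝ) - m) / n)^2 * (Real.sqrt V1 + Real.sqrt V2)^2 := by ring
  nlinarith [hgrad]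
end

section
/- Let N = 2^K with K ≥ 1 and define a_j = H_N - H_{N - 2^j} for j = 0, 1, …, K-1 and a_K = H_N, where H_n is the n-th harmonic number (H_0 = 0). Then (a_0 + a_1 + ⋯ + a_K) / a_K ≤ 2 + 1/N. -/
lemma harmonic_sub_eq (m n : ℕ) (h : m ≤ n) :
    harmonic n - harmonic m = ∑ i ∈ Finset.Ico m n, ((i : ℚ) + 1)⁻¹ := by
  rw [Finset.sum_Ico_eq_sub _ h]
  unfold harmonic
  congr 1 <;> (apply Finset.sum_congr rfl; intro i _; push_cast; ring_nf)

lemma harmonic_sub_le (m n : ℕ) (h : m ≤ n) :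
    harmonic n - harmonic m ≤ ((n : ℚ) - m) / (m + 1) := by
  rw [harmonic_sub_eq m n h]
  calc ∑ i ∈ Finset.Ico m n, ((i : ℚ) + 1)⁻¹
      ≤ ∑ i ∈ Finset.Ico m n, ((m : ℚ) + 1)⁻¹ := by
        apply Finset.sum_le_sum
        intro i hi
        have : (m : ℚ) ≤ i := by exact_mod_cast (Finset.mem_Ico.mp hi).1
        exact inv_anti₀ (by positivity) (by linarith)
    _ = ((n : ℚ) - m) / (m + 1) := by
        rw [Finset.sum_const, Nat.card_Ico, nsmul_eq_mul, Nat.cast_sub h]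
        ring

lemma harmonic_sub_ge (m n : ℕ) (h : m ≤ n) :
    ((n : ℚ) - m) / n ≤ harmonic n - harmonic m := by
  rcases Nat.eq_zero_or_pos n with rfl | hn
  · interval_cases m; simp
  rw [harmonic_sub_eq m n h]
  calc ((n : ℚ) - m) / n = ∑ i ∈ Finset.Ico m n, ((n : ℚ))⁻¹ := by
        rw [Finset.sum_const, Nat.card_Ico, nsmul_eq_mul, Nat.cast_sub h]; ring
    _ ≤ ∑ i ∈ Finset.Ico m n, ((i : ℚ) + 1)⁻¹ := by
        apply Finset.sum_le_sum
        intro i hi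
        have : i < n := (Finset.mem_Ico.mp hi).2
        have : (i : ℚ) + 1 ≤ n := by exact_mod_cast this
        exact inv_anti₀ (by positivity) this

lemma harmonic_two_pow_ge (K : ℕ) : 1 + (K : ℚ) / 2 ≤ harmonic (2 ^ K) := by
  induction K with
  | zero => simp [harmonic]
  | succ k ih =>
    have h1 : (2 : ℕ) ^ k ≤ 2 ^ (k + 1) := Nat.pow_le_pow_right (by norm_num) (by omega)
    have hge := harmonic_sub_ge (2 ^ k) (2 ^ (k + 1)) h1
    have h3 : (1 : ℚ) / 2 ≤ harmonic (2 ^ (k + 1)) - harmonic (2 ^ k) := by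
      refine le_trans (le_of_eq ?_) hge
      have hx : ((2 ^ (k + 1) : ℕ) : ℚ) ≠ 0 := by positivity
      have h2 : ((2 ^ k : ℕ) : ℚ) = ((2 ^ (k + 1) : ℕ) : ℚ) / 2 := by push_cast; ring
      rw [h2]
      field_simp
      ring
    push_cast at ih ⊢
    linarith

lemma geom_sum_pow (K : ℕ) :
    ∑ j ∈ Finset.range K, (2 : ℚ) ^ (j + 1) = 2 ^ (K + 1) - 2 := by
  induction K with
  | zero => simp
  | succ k ih => rw [Finset.sum_range_succ, ih]; ring

/-- Let `N = 2^K` with `K ≥ 1` and `a_j = H_N - H_{N - 2^j}` for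
`j = 0, …, K-1`, `a_K = H_N`. Then `(a_0 + ⋯ + a_K)/a_K ≤ 2 + 1/N`. -/
theorem stmt_12 (K N : ℕ) (hK : 1 ≤ K) (hN : N = 2 ^ K) :
    ((∑ j ∈ Finset.range K, ((harmonic N : ℝ) - (harmonic (N - 2 ^ j) : ℝ)))
        + (harmonic N : ℝ)) / (harmonic N : ℝ) ≤ 2 + 1 / (N : ℝ) := by
  subst hN
  set N := 2 ^ K with hN
  have hNpos : 0 < N := by rw [hN]; positivity
  have key : (∑ j ∈ Finset.range K, (harmonic N - harmonic (N - 2 ^ j)))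
      ≤ harmonic N := by
    have step : ∀ j ∈ Finset.range K,
        harmonic N - harmonic (N - 2 ^ j) ≤ (2 : ℚ) ^ (j + 1) / N := by
      intro j hj
      have hjK : j < K := Finset.mem_range.mp hj
      have hle : (2 : ℕ) ^ j ≤ N := by
        rw [hN]; exact Nat.pow_le_pow_right (by norm_num) (by omega)
      have hle' : (2 : ℕ) ^ (j + 1) ≤ N := by
        rw [hN]; exact Nat.pow_le_pow_right (by norm_num) (by omega)
      have h1 := harmonic_sub_le (N - 2 ^ j) N (Nat.sub_le _ _)
      refine h1.trans ?_
      have hc : ((N - 2 ^ j : ℕ) : ℚ) = (N : ℚ) - 2 ^ j := by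
        rw [Nat.cast_sub hle]; push_cast; ring
      rw [hc]
      have hNQ : (0 : ℚ) < N := by exact_mod_cast hNpos
      have hp : (0 : ℚ) < 2 ^ j := by positivity
      have h2j : 2 * (2 : ℚ) ^ j ≤ N := by
        have : ((2 ^ (j + 1) : ℕ) : ℚ) ≤ N := by exact_mod_cast hle'
        push_cast at this; rw [pow_succ] at this; linarith [this]
      have hden : (0 : ℚ) < (N : ℚ) - 2 ^ j + 1 := by nlinarith
      rw [div_le_div_iff₀ hden hNQ, pow_succ]
      nlinarith [mul_nonneg hp.le (by linarith : (0 : ℚ) ≤ (N : ℚ) - 2 * 2 ^ j + 2)]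
    have hsum := Finset.sum_le_sum step
    refine hsum.trans ?_
    rw [← Finset.sum_div, geom_sum_pow]
    have hNQ : (0 : ℚ) < N := by exact_mod_cast hNpos
    have hbound : ((2 : ℚ) ^ (K + 1) - 2) / N ≤ 1 + (K : ℚ) / 2 := by
      have hNeq : (N : ℚ) = 2 ^ K := by rw [hN]; push_cast; ring
      rw [div_le_iff₀ hNQ, hNeq]
      rcases Nat.lt_or_ge K 2 with h | h
      · interval_cases K <;> norm_num
      · have : (2 : ℚ) ≤ K := by exact_mod_cast h
        have hp : (0 : ℚ) < 2 ^ K := by positivity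
        rw [pow_succ]
        nlinarith [mul_nonneg (by linarith : (0:ℚ) ≤ (K:ℚ)/2 - 1) hp.le]
    exact hbound.trans (harmonic_two_pow_ge K)
  have hH : (0 : ℝ) < (harmonic N : ℝ) := by
    exact_mod_cast harmonic_pos hNpos.ne'
  have keyR : (∑ j ∈ Finset.range K, ((harmonic N : ℝ) - (harmonic (N - 2 ^ j) : ℝ)))
      ≤ (harmonic N : ℝ) := by
    have : ((∑ j ∈ Finset.range K, (harmonic N - harmonic (N - 2 ^ j)) : ℚ) : ℝ)
        ≤ ((harmonic N : ℚ) : ℝ) := by exact_mod_cast key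
    simpa [Rat.cast_sum] using this
  rw [div_le_iff₀ hH]
  have h1N : (0 : ℝ) ≤ 1 / (N : ℝ) * (harmonic N : ℝ) := by positivity
  nlinarith [keyR, hH]
end
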